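/- Let P(X) = Σ_{k=0}^d X^k a_k be a quaternionic polynomial of degree d ≥ 1, let M = max_{|x|=1} |P(x)|, and suppose there exists y ∈ ℍ with |y| = 1 such that |P'(y)| = d·M. Then P(X) = X^d a for some quaternion a with |a| = M, i.e., a_k = 0 for all 0 ≤ k ≤ d−1. -/

import Mathlib

open scoped Real
open MeasureTheory Finset intervalIntegral
open scoped RealInnerProductSpace

noncomputable section QBernsteinAuxSection

namespace QBernsteinAux

local notation "ℍ" => Quaternion ℝ

variable (I : ℍ)

/-- slice circle map -/
def e (θ : ℝ) : ℍ := ((Real.cos θ : ℝ) : ℍ) + Real.sin θ • I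

variable {I}

lemma e_zero : e I 0 = 1 := by simp [e]

lemma e_apply_f (hI : I * I = -1) (θ : ℝ) :
    e I θ = Complex.liftAux I hI (Complex.exp (θ * Complex.I)) := by
  rw [Complex.liftAux_apply]
  simp [e, Complex.exp_ofReal_mul_I_re, Complex.exp_ofReal_mul_I_im,
    Quaternion.algebraMap_def]

lemma e_add (hI : I * I = -1) (α β : ℝ) : e I (α + β) = e I α * e I β := by
  rw [e_apply_f hI, e_apply_f hI, e_apply_f hI, ← map_mul, ← Complex.exp_add]
  push_cast
  ring_nf

lemma e_pow (hI : I * I = -1) (θ : ℝ) (n : ℕ) : e I θ ^ n = e I (n * θ) := by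
  induction n with
  | zero => simp [e_zero]
  | succ n ih =>
      rw [pow_succ, ih, ← e_add hI]
      congr 1
      push_cast
      ring

lemma star_e (hsI : star I = -I) (θ : ℝ) : star (e I θ) = e I (-θ) := by
  simp [e, star_smul, hsI, Real.cos_neg, Real.sin_neg, sub_eq_add_neg]


lemma e_mul_star (hI : I * I = -1) (hsI : star I = -I) (θ : ℝ) :
    e I θ * star (e I θ) = 1 := by
  rw [star_e hsI, ← e_add hI, add_neg_cancel, e_zero]

lemma norm_e (hI : I * I = -1) (hsI : star I = -I) (θ : ℝ) : ‖e I θ‖ = 1 := by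
  have h3 : ‖e I θ‖ * ‖e I θ‖ = 1 := by
    calc ‖e I θ‖ * ‖e I θ‖ = ‖e I θ‖ * ‖star (e I θ)‖ := by rw [norm_star]
    _ = ‖e I θ * star (e I θ)‖ := (norm_mul _ _).symm
    _ = 1 := by rw [e_mul_star hI hsI, norm_one]
  nlinarith [norm_nonneg (e I θ)]

lemma commute_e {q : ℍ} (hq : Commute q I) (θ : ℝ) : Commute q (e I θ) := by
  unfold e
  exact ((Quaternion.coe_commute _ q).symm).add_right (hq.smul_right _)

lemma continuous_e : Continuous (e I) := by
  unfold e
  exact (Quaternion.continuous_coe.comp Real.continuous_cos).add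
    (Real.continuous_sin.smul continuous_const)

lemma continuous_e_lin (c : ℝ) : Continuous (fun θ : ℝ => e I (c * θ)) :=
  continuous_e.comp (continuous_const.mul continuous_id)

lemma smul_one_quat (x : ℝ) : x • (1 : ℍ) = (x : ℍ) := by
  rw [← Quaternion.coe_one, Quaternion.smul_coe, mul_one]

lemma integral_e (hI : I * I = -1) (n : ℤ) :
    (∫ θ in (0:ℝ)..(2 * π), e I ((n : ℝ) * θ)) =
      if n = 0 then ((2 * π : ℝ) • (1 : ℍ)) else 0 := by
  have hcos : IntervalIntegrable (fun θ : ℝ => Real.cos ((n:ℝ) * θ) • (1:ℍ)) volume 0 (2*π) :=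
    ((Real.continuous_cos.comp (continuous_const.mul continuous_id)).smul
      continuous_const).intervalIntegrable _ _
  have hsin : IntervalIntegrable (fun θ : ℝ => Real.sin ((n:ℝ) * θ) • I) volume 0 (2*π) :=
    ((Real.continuous_sin.comp (continuous_const.mul continuous_id)).smul
      continuous_const).intervalIntegrable _ _
  have key : (∫ θ in (0:ℝ)..(2 * π), e I ((n : ℝ) * θ)) =
      (∫ θ in (0:ℝ)..(2*π), Real.cos ((n:ℝ)*θ)) • (1 : ℍ) +
      (∫ θ in (0:ℝ)..(2*π), Real.sin ((n:ℝ)*θ)) • I := by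
    rw [← intervalIntegral.integral_smul_const, ← intervalIntegral.integral_smul_const,
      ← intervalIntegral.integral_add hcos hsin]
    apply intervalIntegral.integral_congr
    intro θ _
    simp [e, smul_one_quat]
  rcases eq_or_ne n 0 with h | h
  · subst h
    rw [key, if_pos rfl]
    norm_num
  · have hn : (n : ℝ) ≠ 0 := Int.cast_ne_zero.mpr h
    have hsin2pi : Real.sin ((n:ℝ) * (2*π)) = 0 := by
      have h2 : (n:ℝ) * (2*π) = ((2*n : ℤ) : ℝ) * π := by push_cast; ring
      rw [h2, Real.sin_int_mul_pi]
    have hcos2pi : Real.cos ((n:ℝ) * (2*π)) = 1 := Real.cos_int_mul_two_pi n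
    have hc : (∫ θ in (0:ℝ)..(2*π), Real.cos ((n:ℝ)*θ)) = 0 := by
      rw [integral_comp_mul_left Real.cos hn, integral_cos]
      rw [mul_zero, hsin2pi, Real.sin_zero, sub_zero, smul_zero]
    have hs : (∫ θ in (0:ℝ)..(2*π), Real.sin ((n:ℝ)*θ)) = 0 := by
      rw [integral_comp_mul_left Real.sin hn, integral_sin]
      rw [mul_zero, hcos2pi, Real.cos_zero, sub_self, smul_zero]
    rw [key, hc, hs, if_neg h]
    simp

lemma integral_mul_const_quat (f : ℝ → ℍ) (hf : IntervalIntegrable f volume 0 (2*π)) (c : ℍ) :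
    (∫ θ in (0:ℝ)..(2*π), f θ * c) = (∫ θ in (0:ℝ)..(2*π), f θ) * c := by
  have := ((ContinuousLinearMap.mul ℝ ℍ).flip c).intervalIntegral_comp_comm hf
  simpa using this

lemma four {ι : Type*} (hI : I * I = -1) (t : Finset ι) (n : ι → ℤ) (b : ι → ℍ) :
    (∫ θ in (0:ℝ)..(2 * π), ∑ i ∈ t, e I ((n i : ℝ) * θ) * b i) =
      ∑ i ∈ t, (if n i = 0 then (2 * π : ℝ) • b i else 0) := by
  rw [intervalIntegral.integral_finset_sum]
  · refine Finset.sum_congr rfl fun i _ => ?_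
    have hint : IntervalIntegrable (fun θ : ℝ => e I ((n i : ℝ) * θ)) volume 0 (2*π) :=
      (continuous_e_lin _).intervalIntegrable _ _
    rw [integral_mul_const_quat _ hint, integral_e hI]
    split
    · rw [smul_mul_assoc, one_mul]
    · rw [zero_mul]
  · intro i _
    exact ((continuous_e_lin _).mul continuous_const).intervalIntegrable _ _


lemma count_lemma (d k : ℕ) (hk : k ≤ d) (c : ℍ) :
    (∑ j ∈ Finset.range d, ∑ l ∈ Finset.range d,
      (if ((j:ℤ) + k - l - d = 0) then c else 0)) = k • c := by
  have h1 : ∀ j ∈ Finset.range d,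
      (∑ l ∈ Finset.range d, if ((j:ℤ) + k - l - d = 0) then c else 0)
      = if d ≤ j + k then c else 0 := by
    intro j hj
    rw [Finset.mem_range] at hj
    rcases le_or_gt d (j + k) with h | h
    · rw [if_pos h]
      have key : ∀ l ∈ Finset.range d, (if ((j:ℤ) + k - l - d = 0) then c else 0)
          = if l = j + k - d then c else 0 := by
        intro l _
        congr 1
        rw [eq_iff_iff]
        omega
      rw [Finset.sum_congr rfl key, Finset.sum_ite_eq' (Finset.range d)]
      rw [if_pos (Finset.mem_range.mpr (by omega))]
    · rw [if_neg h.not_ge]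
      apply Finset.sum_eq_zero
      intro l hl
      rw [Finset.mem_range] at hl
      rw [if_neg (by omega)]
  rw [Finset.sum_congr rfl h1, ← Finset.sum_filter, Finset.sum_const]
  congr 1
  have h2 : Finset.filter (fun j => d ≤ j + k) (Finset.range d) = Finset.Ico (d - k) d := by
    ext j
    simp only [Finset.mem_filter, Finset.mem_range, Finset.mem_Ico]
    omega
  rw [h2, Nat.card_Ico]
  omega

lemma exists_I (y : ℍ) : ∃ I : ℍ, I * I = -1 ∧ star I = -I ∧ Commute y I := by
  by_cases hz : y.im = 0
  · refine ⟨⟨0, 1, 0, 0⟩, ?_, ?_, ?_⟩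
    · ext
      · erw [Quaternion.re_mul]; simp [Quaternion.re_one]
      · erw [Quaternion.imI_mul]; simp [Quaternion.imI_one]
      · erw [Quaternion.imJ_mul]; simp [Quaternion.imJ_one]
      · erw [Quaternion.imK_mul]; simp [Quaternion.imK_one]
    · exact Quaternion.star_eq_neg.mpr rfl
    · have : y = ((y.re : ℝ) : ℍ) := by
        conv_lhs => rw [← Quaternion.re_add_im y]
        rw [hz, add_zero]
      rw [this]
      exact Quaternion.coe_commute _ _
  · set z := y.im with hzdef
    have hzre : z.re = 0 := by rw [hzdef]; exact Quaternion.re_im (a := y)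
    have hstz : star z = -z := Quaternion.star_eq_neg.mpr hzre
    have hnz : ‖z‖ ≠ 0 := norm_ne_zero_iff.mpr hz
    refine ⟨‖z‖⁻¹ • z, ?_, ?_, ?_⟩
    · have hzz : z * z = -((Quaternion.normSq z : ℝ) : ℍ) := by
        rw [← Quaternion.self_mul_star z, hstz, mul_neg, neg_neg]
      rw [smul_mul_smul_comm, hzz, Quaternion.normSq_eq_norm_mul_self]
      rw [smul_neg, Quaternion.smul_coe]
      rw [show ‖z‖⁻¹ * ‖z‖⁻¹ * (‖z‖ * ‖z‖) = 1 by field_simp]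
      norm_num
    · rw [← Quaternion.coe_mul_eq_smul, star_mul, Quaternion.star_coe, hstz, neg_mul,
        ← Quaternion.coe_commutes, Quaternion.coe_mul_eq_smul]
    · have hcz : Commute z (‖z‖⁻¹ • z) := Commute.refl z |>.smul_right _
      have : Commute y z := by
        conv_lhs => rw [← Quaternion.re_add_im y]
        exact (Quaternion.coe_commute _ _).add_left (Commute.refl z)
      exact (this.smul_right _)


lemma e_mul_comm (hq : Commute q I) (α : ℝ) (b : ℍ) :
    e I α * (q * b) = q * (e I α * b) := by
  rw [← mul_assoc, ← (commute_e hq α).eq, mul_assoc]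

lemma e_mul_e_mul (hI : I * I = -1) (α β : ℝ) (b : ℍ) :
    e I α * (e I β * b) = e I (α + β) * b := by
  rw [← mul_assoc, ← e_add hI]

lemma count_lemma' (d : ℕ) (w : ℕ → ℍ) :
    (∑ j ∈ Finset.range d, ∑ l ∈ Finset.range d, ∑ k ∈ Finset.range (d+1),
      (if ((j:ℤ) + k - l - d = 0) then w k else 0))
    = ∑ k ∈ Finset.range (d+1), k • w k := by
  have h1 : ∀ j ∈ Finset.range d,
      (∑ l ∈ Finset.range d, ∑ k ∈ Finset.range (d+1),
        (if ((j:ℤ) + k - l - d = 0) then w k else 0))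
      = ∑ k ∈ Finset.range (d+1), ∑ l ∈ Finset.range d,
        (if ((j:ℤ) + k - l - d = 0) then w k else 0) := fun j _ => Finset.sum_comm
  rw [Finset.sum_congr rfl h1, Finset.sum_comm]
  refine Finset.sum_congr rfl fun k hk => ?_
  rw [Finset.mem_range] at hk
  exact count_lemma d k (by omega) (w k)

end QBernsteinAux


set_option maxHeartbeats 2000000 in
open QBernsteinAux in
theorem quaternionic_bernstein_equality'
    (d : ℕ) (hd : 1 ≤ d) (a : ℕ → Quaternion ℝ) (had : a d ≠ 0) (M : ℝ)
    (hM₁ : ∀ x : Quaternion ℝ, ‖x‖ = 1 →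
      ‖∑ k ∈ Finset.range (d + 1), x ^ k * a k‖ ≤ M)
    (hM₂ : ∃ x : Quaternion ℝ, ‖x‖ = 1 ∧
      ‖∑ k ∈ Finset.range (d + 1), x ^ k * a k‖ = M)
    (y : Quaternion ℝ) (hy : ‖y‖ = 1)
    (hPy : ‖∑ k ∈ Finset.range d, y ^ k * (((k + 1 : ℕ) : Quaternion ℝ) * a (k + 1))‖ = d * M) :
    (∀ k < d, a k = 0) ∧ ‖a d‖ = M := by
  obtain ⟨I, hI, hsI, hyI⟩ := exists_I y
  have hIre : I.re = 0 := Quaternion.star_eq_neg.mp hsI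
  have hMnonneg : 0 ≤ M := by
    obtain ⟨x, _, hx2⟩ := hM₂; rw [← hx2]; exact norm_nonneg _
  have hdR : (0:ℝ) < d := by exact_mod_cast hd
  -- the function s
  set s : ℝ → Quaternion ℝ := fun θ =>
    ∑ k ∈ Finset.range (d+1), e I ((((k:ℤ) - d : ℤ) : ℝ) * θ) * (y ^ k * a k) with hs_def
  have hs_cont : Continuous s :=
    continuous_finset_sum _ fun k _ => (continuous_e_lin _).mul continuous_const
  have hs_eq : ∀ θ : ℝ, s θ
      = e I (-((d:ℝ) * θ)) * ∑ k ∈ Finset.range (d+1), (y * e I θ) ^ k * a k := by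
    intro θ
    rw [hs_def, Finset.mul_sum]
    refine Finset.sum_congr rfl fun k _ => ?_
    rw [(commute_e hyI θ).mul_pow, e_pow hI, mul_assoc,
      e_mul_comm (hyI.pow_left k), e_mul_comm (hyI.pow_left k), e_mul_e_mul hI]
    congr 3
    push_cast
    ring
  have hs_norm : ∀ θ : ℝ, ‖s θ‖ ≤ M := by
    intro θ
    rw [hs_eq θ, norm_mul, norm_e hI hsI, one_mul]
    exact hM₁ _ (by rw [norm_mul, hy, norm_e hI hsI, one_mul])
  -- the kernel
  set g : ℝ → Quaternion ℝ := fun θ => ∑ j ∈ Finset.range d, e I ((j:ℝ) * θ) with hg_def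
  have hg_cont : Continuous g := continuous_finset_sum _ fun j _ => continuous_e_lin _
  set K : ℝ → ℝ := fun θ => ‖g θ‖ ^ 2 with hK_def
  have hK_cont : Continuous K := (hg_cont.norm).pow 2
  have hK_nonneg : ∀ θ, 0 ≤ K θ := fun θ => pow_nonneg (norm_nonneg _) 2
  have hgK : ∀ θ : ℝ, ((K θ : ℝ) : Quaternion ℝ) = g θ * star (g θ) := by
    intro θ
    rw [Quaternion.self_mul_star, hK_def]
    norm_cast
    rw [Quaternion.normSq_eq_norm_mul_self]
    ring
  -- pointwise expansion of K • s
  have hKs : ∀ θ : ℝ, K θ • s θ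
      = ∑ j ∈ Finset.range d, ∑ l ∈ Finset.range d, ∑ k ∈ Finset.range (d+1),
        e I ((((j:ℤ) + k - l - d : ℤ) : ℝ) * θ) * (y ^ k * a k) := by
    intro θ
    rw [← Quaternion.coe_mul_eq_smul, hgK θ]
    have hstar : star (g θ) = ∑ l ∈ Finset.range d, e I (-((l:ℝ) * θ)) := by
      rw [hg_def, star_sum]
      exact Finset.sum_congr rfl fun l _ => star_e hsI _
    rw [hstar, hg_def]
    rw [Finset.sum_mul_sum]
    rw [Finset.sum_mul]
    refine Finset.sum_congr rfl fun j _ => ?_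
    rw [Finset.sum_mul]
    refine Finset.sum_congr rfl fun l _ => ?_
    rw [hs_def, Finset.mul_sum]
    refine Finset.sum_congr rfl fun k _ => ?_
    rw [mul_assoc, e_mul_e_mul hI, e_mul_e_mul hI]
    congr 2
    push_cast
    ring
  -- the integral J
  set J : Quaternion ℝ := ∫ θ in (0:ℝ)..(2*π), K θ • s θ with hJ_def
  have hJ : J = (2*π : ℝ) • ∑ k ∈ Finset.range (d+1), k • (y ^ k * a k) := by
    have h1 : J = ∫ θ in (0:ℝ)..(2*π),
        ∑ p ∈ (Finset.range d ×ˢ (Finset.range d ×ˢ Finset.range (d+1))),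
          e I ((((p.1:ℤ) + p.2.2 - p.2.1 - d : ℤ) : ℝ) * θ) * (y ^ p.2.2 * a p.2.2) := by
      rw [hJ_def]
      apply intervalIntegral.integral_congr
      intro θ _
      beta_reduce
      rw [hKs θ, Finset.sum_product]
      exact Finset.sum_congr rfl fun j _ => by rw [Finset.sum_product]
    rw [h1, four hI]
    rw [Finset.sum_product]
    have h2 : ∀ j ∈ Finset.range d,
        (∑ p ∈ Finset.range d ×ˢ Finset.range (d+1),
          if ((j:ℤ) + p.2 - p.1 - d = 0) then (2*π:ℝ) • (y ^ p.2 * a p.2) else 0)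
        = ∑ l ∈ Finset.range d, ∑ k ∈ Finset.range (d+1),
          if ((j:ℤ) + k - l - d = 0) then (2*π:ℝ) • (y ^ k * a k) else 0 :=
      fun j _ => by rw [Finset.sum_product]
    rw [Finset.sum_congr rfl h2, count_lemma' d (fun k => (2*π:ℝ) • (y ^ k * a k)),
      Finset.smul_sum]
    exact Finset.sum_congr rfl fun k _ => smul_comm _ _ _
  have hJnorm : ‖J‖ = 2*π*(d*M) := by
    have hsum : ∑ k ∈ Finset.range (d+1), k • (y ^ k * a k)
        = y * ∑ k ∈ Finset.range d, y ^ k * (((k+1 : ℕ) : Quaternion ℝ) * a (k+1)) := by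
      rw [Finset.mul_sum, Finset.sum_range_succ']
      simp only [zero_smul, add_zero, pow_zero]
      refine Finset.sum_congr rfl fun k _ => ?_
      rw [← mul_assoc, ← pow_succ']
      rw [nsmul_eq_mul, ← mul_assoc, (Nat.cast_commute ((k:ℕ)+1) (y^(k+1))).eq, mul_assoc]
    rw [hJ, hsum, norm_smul, norm_mul y, hy, one_mul, hPy, Real.norm_eq_abs,
      abs_of_pos (by positivity)]
  -- integral of K
  have hIK : (∫ θ in (0:ℝ)..(2*π), K θ) = 2*π*d := by
    have h1 : ∀ θ : ℝ, K θ • (1 : Quaternion ℝ)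
        = ∑ p ∈ Finset.range d ×ˢ Finset.range d,
            e I ((((p.1:ℤ) - p.2 : ℤ) : ℝ) * θ) * (1 : Quaternion ℝ) := by
      intro θ
      rw [smul_one_quat, hgK θ]
      have hstar : star (g θ) = ∑ l ∈ Finset.range d, e I (-((l:ℝ) * θ)) := by
        rw [hg_def, star_sum]
        exact Finset.sum_congr rfl fun l _ => star_e hsI _
      rw [hstar, hg_def, Finset.sum_mul_sum, Finset.sum_product]
      refine Finset.sum_congr rfl fun j _ => Finset.sum_congr rfl fun l _ => ?_
      rw [mul_one]
      rw [← e_add hI]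
      congr 1
      push_cast
      ring
    have h2 : ((∫ θ in (0:ℝ)..(2*π), K θ : ℝ) : Quaternion ℝ)
        = ((2*π*d : ℝ) : Quaternion ℝ) := by
      rw [← smul_one_quat, ← intervalIntegral.integral_smul_const]
      rw [intervalIntegral.integral_congr (fun θ _ => h1 θ), four hI]
      have h3 : ∀ p ∈ Finset.range d ×ˢ Finset.range d,
          (if ((p.1:ℤ) - p.2 = 0) then (2*π:ℝ) • (1 : Quaternion ℝ) else 0)
          = if p.2 = p.1 then (2*π:ℝ) • (1 : Quaternion ℝ) else 0 := by
        intro p _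
        congr 1
        rw [eq_iff_iff]
        omega
      rw [Finset.sum_congr rfl h3, Finset.sum_product]
      have h4 : ∀ j ∈ Finset.range d,
          (∑ l ∈ Finset.range d, if l = j then (2*π:ℝ) • (1 : Quaternion ℝ) else 0)
          = (2*π:ℝ) • (1 : Quaternion ℝ) := by
        intro j hj
        rw [Finset.sum_ite_eq' (Finset.range d) j]
        rw [if_pos hj]
      rw [Finset.sum_congr rfl h4, Finset.sum_const, Finset.card_range]
      rw [smul_one_quat, nsmul_eq_mul]
      push_cast
      exact_mod_cast congrArg (fun r : ℝ => (r : Quaternion ℝ))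
        (by ring : (d:ℝ) * (2 * π) = 2 * π * (d:ℝ))
    exact Quaternion.coe_injective h2
  -- extraction of Fourier coefficients
  have hEXT : ∀ m ∈ Finset.range (d+1),
      (∫ θ in (0:ℝ)..(2*π), e I ((((d:ℤ) - m : ℤ) : ℝ) * θ) * s θ)
      = (2*π:ℝ) • (y ^ m * a m) := by
    intro m hm
    have h1 : ∀ θ : ℝ, e I ((((d:ℤ) - m : ℤ) : ℝ) * θ) * s θ
        = ∑ k ∈ Finset.range (d+1),
          e I ((((k:ℤ) - m : ℤ) : ℝ) * θ) * (y ^ k * a k) := by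
      intro θ
      rw [hs_def, Finset.mul_sum]
      refine Finset.sum_congr rfl fun k _ => ?_
      rw [← mul_assoc, ← e_add hI]
      have harg : (((d:ℤ) - m : ℤ) : ℝ) * θ + (((k:ℤ) - d : ℤ) : ℝ) * θ
          = (((k:ℤ) - m : ℤ) : ℝ) * θ := by push_cast; ring
      rw [harg]
    rw [intervalIntegral.integral_congr (fun θ _ => h1 θ), four hI]
    have h2 : ∀ k ∈ Finset.range (d+1),
        (if ((k:ℤ) - m = 0) then (2*π:ℝ) • (y ^ k * a k) else 0)
        = if k = m then (2*π:ℝ) • (y ^ k * a k) else 0 := by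
      intro k _
      congr 1
      rw [eq_iff_iff]
      omega
    rw [Finset.sum_congr rfl h2, Finset.sum_ite_eq' _ m, if_pos hm]
  -- a.e. constancy of s
  have hW : ∃ w : Quaternion ℝ,
      ∀ᵐ θ ∂(volume.restrict (Set.Ioc (0:ℝ) (2*π))), s θ = w := by
    rcases eq_or_lt_of_le hMnonneg with hM0 | hMpos
    · refine ⟨0, MeasureTheory.ae_of_all _ fun θ => ?_⟩
      have h := hs_norm θ
      rw [← hM0] at h
      exact norm_le_zero_iff.mp h
    · have hJpos : 0 < ‖J‖ := by rw [hJnorm]; positivity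
      set φ : ℝ → ℝ := fun θ => K θ * (‖J‖ * M - ⟪J, s θ⟫) with hφ_def
      have hφ_cont : Continuous φ :=
        hK_cont.mul (continuous_const.sub (continuous_const.inner hs_cont))
      have hφ_nonneg : ∀ θ, 0 ≤ φ θ := by
        intro θ
        apply mul_nonneg (hK_nonneg θ)
        have h1 := real_inner_le_norm J (s θ)
        have h2 : ‖J‖ * ‖s θ‖ ≤ ‖J‖ * M :=
          mul_le_mul_of_nonneg_left (hs_norm θ) (norm_nonneg J)
        linarith
      have hint : (∫ θ in (0:ℝ)..(2*π), φ θ) = 0 := by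
        have hKs_int : IntervalIntegrable (fun θ => K θ • s θ) volume 0 (2*π) :=
          (hK_cont.smul hs_cont).intervalIntegrable _ _
        have e1 : (∫ θ in (0:ℝ)..(2*π), K θ * ⟪J, s θ⟫) = ‖J‖ * ‖J‖ := by
          have hpt : ∀ θ : ℝ, K θ * ⟪J, s θ⟫ = ⟪J, K θ • s θ⟫ :=
            fun θ => (real_inner_smul_right J (s θ) (K θ)).symm
          rw [intervalIntegral.integral_congr (fun θ _ => hpt θ)]
          have h := (innerSL ℝ J).intervalIntegral_comp_comm hKs_int
          simp only [innerSL_apply_apply] at h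
          rw [h, ← hJ_def, real_inner_self_eq_norm_mul_norm]
        have e2 : (∫ θ in (0:ℝ)..(2*π), K θ * (‖J‖ * M)) = 2*π*d*(‖J‖*M) := by
          rw [intervalIntegral.integral_mul_const, hIK]
        have e3 : (∫ θ in (0:ℝ)..(2*π), φ θ)
            = (∫ θ in (0:ℝ)..(2*π), K θ * (‖J‖ * M))
              - (∫ θ in (0:ℝ)..(2*π), K θ * ⟪J, s θ⟫) := by
          rw [← intervalIntegral.integral_sub (f := fun θ => K θ * (‖J‖ * M)) (g := fun θ => K θ * ⟪J, s θ⟫)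
            ((hK_cont.mul continuous_const).intervalIntegrable _ _)
            ((hK_cont.mul (continuous_const.inner hs_cont)).intervalIntegrable _ _)]
          apply intervalIntegral.integral_congr
          intro θ _
          rw [hφ_def]
          ring
        rw [e3, e1, e2, hJnorm]
        ring
      have hae : ∀ᵐ θ ∂(volume.restrict (Set.Ioc (0:ℝ) (2*π))), φ θ = 0 := by
        have := (intervalIntegral.integral_eq_zero_iff_of_le_of_nonneg_ae
          (by positivity : (0:ℝ) ≤ 2*π)
          (Filter.Eventually.of_forall fun θ => hφ_nonneg θ)
          (hφ_cont.intervalIntegrable _ _)).mp hint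
        filter_upwards [this] with θ h
        exact h
      have hKa : ∀ᵐ θ ∂(volume : Measure ℝ), K θ ≠ 0 := by
        have hsub : {θ : ℝ | K θ = 0} ⊆ Set.range (fun n : ℤ => (n : ℝ) * (2*π) / d) := by
          intro θ hθ
          have hg0 : g θ = 0 := by
            have h0 : ‖g θ‖ ^ 2 = 0 := hθ
            have : ‖g θ‖ = 0 := by nlinarith [norm_nonneg (g θ)]
            exact norm_eq_zero.mp this
          have htel : (1 - e I θ) * g θ = 1 - e I ((d:ℝ)*θ) := by
            rw [hg_def, sub_mul, one_mul, Finset.mul_sum, ← Finset.sum_sub_distrib]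
            have hterm : ∀ j ∈ Finset.range d,
                e I ((j:ℝ)*θ) - e I θ * e I ((j:ℝ)*θ)
                = e I ((j:ℝ)*θ) - e I (((j+1:ℕ):ℝ)*θ) := by
              intro j _
              rw [← e_add hI]
              congr 2
              push_cast
              ring
            rw [Finset.sum_congr rfl hterm, Finset.sum_range_sub' (fun j => e I ((j:ℝ)*θ))]
            congr 2
            · rw [Nat.cast_zero, zero_mul, e_zero]
          rw [hg0, mul_zero] at htel
          have hed : e I ((d:ℝ)*θ) = 1 := by
            have := htel.symm
            rwa [sub_eq_zero, eq_comm] at this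
          have hcos : Real.cos ((d:ℝ)*θ) = 1 := by
            have hre := congrArg QuaternionAlgebra.re hed
            simpa [e, hIre, Quaternion.re_one] using hre
          obtain ⟨n, hn⟩ := (Real.cos_eq_one_iff _).mp hcos
          refine ⟨n, ?_⟩
          field_simp
          linarith
        refine MeasureTheory.ae_iff.mpr (measure_mono_null
          (fun θ hθ => hsub (not_not.mp hθ))
          ((Set.countable_range _).measure_zero _))
      refine ⟨(M / ‖J‖) • J, ?_⟩
      have hKa' : ∀ᵐ θ ∂(volume.restrict (Set.Ioc (0:ℝ) (2*π))), K θ ≠ 0 :=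
        MeasureTheory.ae_restrict_of_ae hKa
      filter_upwards [hae, hKa'] with θ h1 h2
      have hip : ⟪J, s θ⟫ = ‖J‖ * M := by
        rcases mul_eq_zero.mp h1 with h | h
        · exact absurd h h2
        · linarith [sub_eq_zero.mp h]
      have hsnorm : ‖s θ‖ = M := by
        have h1' : ‖J‖ * M ≤ ‖J‖ * ‖s θ‖ := by
          rw [← hip]; exact real_inner_le_norm J (s θ)
        have h2' : ‖s θ‖ ≤ M := hs_norm θ
        nlinarith
      have heq : ⟪J, s θ⟫ = ‖J‖ * ‖s θ‖ := by rw [hip, hsnorm]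
      have hcs := inner_eq_norm_mul_iff_real.mp heq
      rw [hsnorm] at hcs
      calc s θ = (‖J‖⁻¹ * ‖J‖) • s θ := by rw [inv_mul_cancel₀ hJpos.ne', one_smul]
      _ = ‖J‖⁻¹ • (‖J‖ • s θ) := by rw [mul_smul]
      _ = ‖J‖⁻¹ • (M • J) := by rw [← hcs]
      _ = (M / ‖J‖) • J := by rw [smul_smul, div_eq_inv_mul]
  obtain ⟨w, hw⟩ := hW
  have hw' : ∀ᵐ θ ∂(volume : Measure ℝ), θ ∈ Set.uIoc (0:ℝ) (2*π) → s θ = w := by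
    rw [Set.uIoc_of_le (by positivity : (0:ℝ) ≤ 2*π)]
    exact (MeasureTheory.ae_restrict_iff' measurableSet_Ioc).mp hw
  have hzero : ∀ m, m < d → a m = 0 := by
    intro m hmd
    have hm1 : m ∈ Finset.range (d+1) := Finset.mem_range.mpr (by omega)
    have h2 : (∫ θ in (0:ℝ)..(2*π), e I ((((d:ℤ) - m : ℤ) : ℝ) * θ) * s θ)
        = (∫ θ in (0:ℝ)..(2*π), e I ((((d:ℤ) - m : ℤ) : ℝ) * θ) * w) := by
      apply intervalIntegral.integral_congr_ae
      filter_upwards [hw'] with θ h hmem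
      rw [h hmem]
    have h3 : (∫ θ in (0:ℝ)..(2*π), e I ((((d:ℤ) - m : ℤ) : ℝ) * θ) * w) = 0 := by
      rw [integral_mul_const_quat _ ((continuous_e_lin _).intervalIntegrable _ _),
        integral_e hI, if_neg (by omega : ¬ ((d:ℤ) - m = 0)), zero_mul]
    have h4 : (2*π:ℝ) • (y ^ m * a m) = 0 := by
      rw [← hEXT m hm1, h2, h3]
    have h5 : y ^ m * a m = 0 := by
      rcases smul_eq_zero.mp h4 with h | h
      · exact absurd h (by positivity)
      · exact h
    have hy0 : y ^ m ≠ 0 := by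
      apply pow_ne_zero
      intro h
      rw [h, norm_zero] at hy
      norm_num at hy
    rcases mul_eq_zero.mp h5 with h | h
    · exact absurd h hy0
    · exact h
  refine ⟨hzero, ?_⟩
  obtain ⟨x, hx1, hx2⟩ := hM₂
  have hcollapse : ∑ k ∈ Finset.range (d + 1), x ^ k * a k = x ^ d * a d := by
    rw [Finset.sum_range_succ, Finset.sum_eq_zero, zero_add]
    intro k hk
    rw [hzero k (Finset.mem_range.mp hk), mul_zero]
  rw [hcollapse, norm_mul, norm_pow, hx1, one_pow, one_mul] at hx2
  exact hx2


/-- **Equality case in the quaternionic Bernstein inequality.**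
If `P(X) = Σ_{k=0}^d X^k a_k` has degree `d ≥ 1`, `M = max_{‖x‖=1} ‖P(x)‖`, and
`‖P'(y)‖ = d * M` at some `y` with `‖y‖ = 1`, then `P(X) = X^d a` with `‖a‖ = M`,
i.e. `a_k = 0` for `k < d` and `‖a d‖ = M`. -/
theorem quaternionic_bernstein_equality
    (d : ℕ) (hd : 1 ≤ d) (a : ℕ → Quaternion ℝ) (had : a d ≠ 0) (M : ℝ)
    (hM₁ : ∀ x : Quaternion ℝ, ‖x‖ = 1 →
      ‖∑ k ∈ Finset.range (d + 1), x ^ k * a k‖ ≤ M)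
    (hM₂ : ∃ x : Quaternion ℝ, ‖x‖ = 1 ∧
      ‖∑ k ∈ Finset.range (d + 1), x ^ k * a k‖ = M)
    (y : Quaternion ℝ) (hy : ‖y‖ = 1)
    (hPy : ‖∑ k ∈ Finset.range d, y ^ k * (((k + 1 : ℕ) : Quaternion ℝ) * a (k + 1))‖ = d * M) :
    (∀ k < d, a k = 0) ∧ ‖a d‖ = M := by
  exact quaternionic_bernstein_equality' d hd a had M hM₁ hM₂ y hy hPy

end QBernsteinAuxSection
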